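/- (Concentration of the weighted treated-sample mean under stratified randomization.) Assume σ_a² = n⁻¹ ∑_{m=1}^M ∑_{i∈[m]} (a_i − ā_{[m]})² / e_{[m]}² is strictly positive. Then for every t > 0, P( ∑_{m=1}^M π_{[m]} (ā_{[m]1} − ā_{[m]}) ≥ t ) ≤ exp( − n t² / (4 σ_a²) ). -/

import Mathlib

open Finset


lemma exp_le_quad {u : ℝ} (hu : u ≤ 0) : Real.exp u ≤ 1 + u + u ^ 2 / 2 := by
  have key : AntitoneOn (fun u : ℝ => 1 + u + u ^ 2 / 2 - Real.exp u) (Set.Iic 0) := by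
    have hd : ∀ x : ℝ, HasDerivAt (fun u : ℝ => 1 + u + u ^ 2 / 2 - Real.exp u)
        (1 + 2 * x ^ 1 / 2 - Real.exp x) x := fun x =>
      (((hasDerivAt_id x).const_add 1).add ((hasDerivAt_pow 2 x).div_const 2)).sub
        (Real.hasDerivAt_exp x)
    have : ∀ x ∈ interior (Set.Iic (0:ℝ)),
        deriv (fun u : ℝ => 1 + u + u ^ 2 / 2 - Real.exp u) x ≤ 0 := by
      intro x _
      rw [(hd x).deriv]
      have := Real.add_one_le_exp x
      simp only [pow_one]
      linarith
    exact antitoneOn_of_deriv_nonpos (convex_Iic 0)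
      (Continuous.continuousOn (by fun_prop)) (fun x hx => (hd x).differentiableAt.differentiableWithinAt) this
  have := key (Set.mem_Iic.2 hu) (Set.mem_Iic.2 le_rfl) hu
  simp only [ne_eq, OfNat.ofNat_ne_zero, not_false_eq_true, zero_pow, zero_div, add_zero,
    Real.exp_zero] at this
  linarith

/-- Bernoulli Hoeffding with constant 1/2 -/
lemma bernoulli_mgf {p u : ℝ} (hp0 : 0 ≤ p) (hp1 : p ≤ 1) :
    1 - p + p * Real.exp u ≤ Real.exp (p * u + u ^ 2 / 2) := by
  rcases le_or_gt u 0 with hu | hu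
  · -- 1 + p(e^u - 1) ≤ exp (p (e^u - 1)) ≤ exp (pu + u^2/2)
    have h1 : 1 - p + p * Real.exp u = 1 + p * (Real.exp u - 1) := by ring
    have h2 : (1 : ℝ) + p * (Real.exp u - 1) ≤ Real.exp (p * (Real.exp u - 1)) := by
      linarith [Real.add_one_le_exp (p * (Real.exp u - 1))]
    have h3 : p * (Real.exp u - 1) ≤ p * u + u ^ 2 / 2 := by
      have hq := exp_le_quad hu
      have h0 : 0 ≤ Real.exp u - 1 - u := by linarith [Real.add_one_le_exp u]
      have : p * (Real.exp u - 1 - u) ≤ 1 * (Real.exp u - 1 - u) :=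
        mul_le_mul_of_nonneg_right hp1 h0
      nlinarith
    rw [h1]
    exact h2.trans (Real.exp_le_exp.2 h3)
  · -- u > 0 : symmetry trick
    have hq : 1 - (1 - p) + (1 - p) * Real.exp (-u) ≤ Real.exp ((1 - p) * (-u) + (-u) ^ 2 / 2) :=
      by
        rcases le_or_gt (-u) 0 with h | h
        · -- reuse the first case... restate as general lemma? just inline same proof
          have h1 : 1 - (1-p) + (1-p) * Real.exp (-u) = 1 + (1-p) * (Real.exp (-u) - 1) := by ring
          have h2 : (1 : ℝ) + (1-p) * (Real.exp (-u) - 1) ≤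
              Real.exp ((1-p) * (Real.exp (-u) - 1)) := by
            linarith [Real.add_one_le_exp ((1-p) * (Real.exp (-u) - 1))]
          have h3 : (1-p) * (Real.exp (-u) - 1) ≤ (1-p) * (-u) + (-u) ^ 2 / 2 := by
            have hq := exp_le_quad h
            have h0 : 0 ≤ Real.exp (-u) - 1 - (-u) := by linarith [Real.add_one_le_exp (-u)]
            have : (1-p) * (Real.exp (-u) - 1 - (-u)) ≤ 1 * (Real.exp (-u) - 1 - (-u)) :=
              mul_le_mul_of_nonneg_right (by linarith) h0
            nlinarith
          rw [h1]
          exact h2.trans (Real.exp_le_exp.2 h3)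
        · linarith
    -- multiply by e^u
    have := mul_le_mul_of_nonneg_left hq (le_of_lt (Real.exp_pos u))
    calc 1 - p + p * Real.exp u
        = Real.exp u * (1 - (1 - p) + (1 - p) * Real.exp (-u)) := by
          rw [Real.exp_neg]
          field_simp
          ring
      _ ≤ Real.exp u * Real.exp ((1 - p) * (-u) + (-u) ^ 2 / 2) := this
      _ = Real.exp (p * u + u ^ 2 / 2) := by
          rw [← Real.exp_add]; ring_nf

lemma choose_mul_pow_le {n k j : ℕ} (hj : j ≤ k) (hk : k ≤ n) :
    Nat.choose (n - j) (k - j) * n ^ j ≤ Nat.choose n k * k ^ j := by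
  induction j with
  | zero => simp
  | succ j ih =>
    have hjk : j < k := hj
    have hj' : j ≤ k := le_of_lt hjk
    have ihj := ih hj'
    set m := n - j with hm
    set r := k - j with hr
    have hr1 : 1 ≤ r := by omega
    have hm1 : 1 ≤ m := by omega
    have hid : m * Nat.choose (m - 1) (r - 1) = Nat.choose m r * r := by
      have h := Nat.add_one_mul_choose_eq (m - 1) (r - 1)
      simp only [Nat.succ_eq_add_one, Nat.sub_add_cancel hm1, Nat.sub_add_cancel hr1] at h
      exact h
    have hnr : n * r ≤ k * m := by
      have h1 : k * j ≤ n * j := Nat.mul_le_mul_right j hk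
      have : n * r = n * k - n * j := by rw [hr, Nat.mul_sub]
      have h2 : k * m = k * n - k * j := by rw [hm, Nat.mul_sub]
      have h4 : n * k = k * n := Nat.mul_comm n k
      omega
    have key : n * Nat.choose (m - 1) (r - 1) ≤ k * Nat.choose m r := by
      have h3 : n * Nat.choose (m - 1) (r - 1) * r ≤ k * Nat.choose m r * r := by
        calc n * Nat.choose (m - 1) (r - 1) * r
            ≤ k * m * Nat.choose (m - 1) (r - 1) := by
              rw [Nat.mul_right_comm]
              exact Nat.mul_le_mul_right _ hnr
          _ = k * (Nat.choose m r * r) := by rw [Nat.mul_assoc, hid]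
          _ = k * Nat.choose m r * r := by ring
      exact Nat.le_of_mul_le_mul_right h3 hr1
    have e1 : n - (j + 1) = m - 1 := by omega
    have e2 : k - (j + 1) = r - 1 := by omega
    calc Nat.choose (n - (j+1)) (k - (j+1)) * n ^ (j+1)
        = n * Nat.choose (m-1) (r-1) * n ^ j := by rw [e1, e2]; ring
      _ ≤ k * Nat.choose m r * n ^ j := Nat.mul_le_mul_right _ key
      _ = k * (Nat.choose m r * n ^ j) := by ring
      _ ≤ k * (Nat.choose n k * k ^ j) := Nat.mul_le_mul_left _ ihj
      _ = Nat.choose n k * k ^ (j+1) := by ring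


lemma card_filter_superset_le {n k : ℕ} (T : Finset (Fin n)) (hT : T.card ≤ k) :
    (((powersetCard k (univ : Finset (Fin n))).filter (fun s => T ⊆ s)).card : ℕ)
      ≤ Nat.choose (n - T.card) (k - T.card) := by
  have : (((powersetCard k (univ : Finset (Fin n))).filter (fun s => T ⊆ s)).card : ℕ)
      ≤ (powersetCard (k - T.card) ((univ : Finset (Fin n)) \ T)).card := by
    apply Finset.card_le_card_of_injOn (fun s => s \ T)
    · intro s hs
      simp only [mem_coe, mem_filter, mem_powersetCard] at hs
      obtain ⟨⟨hsu, hscard⟩, hTs⟩ := hs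
      simp only [mem_coe, mem_powersetCard]
      constructor
      · exact sdiff_subset_sdiff hsu (le_refl T)
      · rw [card_sdiff_of_subset hTs, hscard]
    · intro s hs s' hs' h
      simp only [coe_filter, Set.mem_setOf_eq, mem_powersetCard] at hs hs'
      have h1 : s = s \ T ∪ T := by rw [sdiff_union_of_subset hs.2]
      have h2 : s' = s' \ T ∪ T := by rw [sdiff_union_of_subset hs'.2]
      rw [h1, h2, show s \ T = s' \ T from h]
  rwa [card_powersetCard, card_sdiff_of_subset (subset_univ T), card_univ, Fintype.card_fin] at this

lemma card_filter_superset_zero {n k : ℕ} (T : Finset (Fin n)) (hT : k < T.card) :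
    ((powersetCard k (univ : Finset (Fin n))).filter (fun s => T ⊆ s)) = ∅ := by
  rw [filter_eq_empty_iff]
  intro s hs
  rw [mem_powersetCard] at hs
  intro hTs
  have := card_le_card hTs
  omega

lemma choose_cast_bound {n k j : ℕ} (hj : j ≤ k) (hk : k ≤ n) (hn : 0 < n) :
    ((Nat.choose (n - j) (k - j) : ℝ)) ≤ (Nat.choose n k : ℝ) * ((k : ℝ) / n) ^ j := by
  have h := choose_mul_pow_le hj hk
  have hcast : ((Nat.choose (n - j) (k - j) : ℝ)) * (n : ℝ) ^ j
      ≤ (Nat.choose n k : ℝ) * (k : ℝ) ^ j := by exact_mod_cast h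
  have hnp : (0 : ℝ) < (n : ℝ) ^ j := by positivity
  rw [div_pow, ← mul_div_assoc, le_div_iff₀ hnp]
  exact hcast

/-- Key counting inequality: negative association for exponential-type products. -/
lemma sum_prod_inter_le {n k : ℕ} (hk : k ≤ n) (hn : 0 < n) (G : Finset (Fin n))
    (y : Fin n → ℝ) (hy : ∀ i ∈ G, 0 ≤ y i) :
    ∑ s ∈ powersetCard k (univ : Finset (Fin n)), ∏ i ∈ s ∩ G, (1 + y i)
      ≤ (Nat.choose n k : ℝ) * ∏ i ∈ G, (1 + (k : ℝ) / n * y i) := by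
  have expand : ∀ s : Finset (Fin n), s ∈ powersetCard k (univ : Finset (Fin n)) →
      ∏ i ∈ s ∩ G, (1 + y i) =
        ∑ T ∈ G.powerset, if T ⊆ s then ∏ i ∈ T, y i else 0 := by
    intro s _
    have h1 : ∏ i ∈ s ∩ G, (1 + y i) = ∏ i ∈ s ∩ G, (y i + 1) := by
      apply prod_congr rfl; intros; ring
    rw [h1, prod_add]
    simp only [prod_const_one, mul_one]
    rw [← Finset.sum_filter]
    apply Finset.sum_congr
    · ext T
      simp only [mem_powerset, mem_filter, subset_inter_iff]
      tauto
    · intros; rfl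
  rw [Finset.sum_congr rfl expand, Finset.sum_comm]
  have step : ∀ T ∈ G.powerset,
      (∑ s ∈ powersetCard k (univ : Finset (Fin n)), if T ⊆ s then ∏ i ∈ T, y i else 0)
        ≤ (Nat.choose n k : ℝ) * ∏ i ∈ T, ((k : ℝ) / n * y i) := by
    intro T hT
    rw [← Finset.sum_filter, Finset.sum_const, nsmul_eq_mul]
    have hprod : 0 ≤ ∏ i ∈ T, y i :=
      Finset.prod_nonneg fun i hi => hy i (mem_powerset.1 hT (hi))
    have hsplit : ∏ i ∈ T, ((k : ℝ) / n * y i) = ((k:ℝ)/n) ^ T.card * ∏ i ∈ T, y i := by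
      rw [Finset.prod_mul_distrib, Finset.prod_const]
    rw [hsplit]
    rcases le_or_gt T.card k with hTk | hTk
    · have hcard := card_filter_superset_le T hTk
      have hb := choose_cast_bound hTk hk hn
      calc ((((powersetCard k (univ : Finset (Fin n))).filter (fun s => T ⊆ s)).card : ℝ))
            * ∏ i ∈ T, y i
          ≤ ((Nat.choose (n - T.card) (k - T.card) : ℝ)) * ∏ i ∈ T, y i := by
            apply mul_le_mul_of_nonneg_right _ hprod
            exact_mod_cast hcard
        _ ≤ ((Nat.choose n k : ℝ) * ((k:ℝ)/n) ^ T.card) * ∏ i ∈ T, y i :=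
            mul_le_mul_of_nonneg_right hb hprod
        _ = (Nat.choose n k : ℝ) * (((k:ℝ)/n) ^ T.card * ∏ i ∈ T, y i) := by ring
    · rw [card_filter_superset_zero T hTk]
      simp only [card_empty, Nat.cast_zero, zero_mul]
      positivity
  calc ∑ T ∈ G.powerset, (∑ s ∈ powersetCard k (univ : Finset (Fin n)),
          if T ⊆ s then ∏ i ∈ T, y i else 0)
      ≤ ∑ T ∈ G.powerset, (Nat.choose n k : ℝ) * ∏ i ∈ T, ((k : ℝ) / n * y i) :=
        Finset.sum_le_sum step
    _ = (Nat.choose n k : ℝ) * ∑ T ∈ G.powerset, ∏ i ∈ T, ((k : ℝ) / n * y i) := by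
        rw [Finset.mul_sum]
    _ = (Nat.choose n k : ℝ) * ∏ i ∈ G, (1 + (k : ℝ) / n * y i) := by
        congr 1
        have := prod_add (fun i => (k : ℝ) / n * y i) (fun _ => (1:ℝ)) G
        simp only [prod_const_one, mul_one] at this
        rw [← this]
        apply prod_congr rfl; intros; ring

lemma sum_prod_exp_le_pos {n k : ℕ} (hk : k ≤ n) (hn : 0 < n) (G : Finset (Fin n))
    (c : Fin n → ℝ) (hc : ∀ i ∈ G, 0 ≤ c i) :
    ∑ s ∈ powersetCard k (univ : Finset (Fin n)), ∏ i ∈ s ∩ G, Real.exp (c i)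
      ≤ (Nat.choose n k : ℝ) *
        ∏ i ∈ G, (1 - (k : ℝ) / n + (k : ℝ) / n * Real.exp (c i)) := by
  have h1 : ∀ s : Finset (Fin n), ∏ i ∈ s ∩ G, Real.exp (c i)
      = ∏ i ∈ s ∩ G, (1 + (Real.exp (c i) - 1)) := by
    intro s; apply prod_congr rfl; intros; ring
  simp only [h1]
  have := sum_prod_inter_le hk hn G (fun i => Real.exp (c i) - 1)
    (fun i hi => show (0:ℝ) ≤ Real.exp (c i) - 1 by linarith [Real.one_le_exp (hc i hi)])
  refine this.trans (le_of_eq ?_)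
  congr 1
  apply prod_congr rfl; intros; ring

lemma sum_prod_exp_le_neg {n k : ℕ} (hk : k ≤ n) (hn : 0 < n) (G : Finset (Fin n))
    (c : Fin n → ℝ) (hc : ∀ i ∈ G, c i ≤ 0) :
    ∑ s ∈ powersetCard k (univ : Finset (Fin n)), ∏ i ∈ s ∩ G, Real.exp (c i)
      ≤ (Nat.choose n k : ℝ) *
        ∏ i ∈ G, (1 - (k : ℝ) / n + (k : ℝ) / n * Real.exp (c i)) := by
  -- rewrite each product via the complement
  have h1 : ∀ s : Finset (Fin n), ∏ i ∈ s ∩ G, Real.exp (c i)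
      = (∏ i ∈ G, Real.exp (c i)) * ∏ i ∈ sᶜ ∩ G, Real.exp (-(c i)) := by
    intro s
    have hsplit : (∏ i ∈ G, Real.exp (c i)) =
        (∏ i ∈ s ∩ G, Real.exp (c i)) * ∏ i ∈ sᶜ ∩ G, Real.exp (c i) := by
      rw [← Finset.prod_union]
      · congr 1
        ext i
        simp only [mem_union, mem_inter, mem_compl]
        tauto
      · rw [Finset.disjoint_left]
        intro i hi hi'
        simp only [mem_inter, mem_compl] at hi hi'
        exact hi'.1 hi.1
    rw [hsplit, mul_assoc, ← Finset.prod_mul_distrib]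
    simp [← Real.exp_add]
  simp only [h1, ← Finset.mul_sum]
  -- change variables s ↦ sᶜ
  have h2 : ∑ s ∈ powersetCard k (univ : Finset (Fin n)), ∏ i ∈ sᶜ ∩ G, Real.exp (-(c i))
      = ∑ u ∈ powersetCard (n - k) (univ : Finset (Fin n)), ∏ i ∈ u ∩ G, Real.exp (-(c i)) := by
    apply Finset.sum_nbij' (fun s => sᶜ) (fun u => uᶜ)
    · intro s hs
      rw [mem_powersetCard_univ] at hs ⊢
      rw [card_compl, hs, Fintype.card_fin]
    · intro u hu
      rw [mem_powersetCard_univ] at hu ⊢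
      rw [card_compl, hu, Fintype.card_fin]
      omega
    · intro s _; simp
    · intro u _; simp
    · intro s _; rfl
  rw [h2]
  have h3 := sum_prod_exp_le_pos (Nat.sub_le n k) hn G (fun i => -(c i))
    (fun i hi => show (0:ℝ) ≤ -(c i) by linarith [hc i hi])
  calc (∏ i ∈ G, Real.exp (c i)) *
        ∑ u ∈ powersetCard (n - k) (univ : Finset (Fin n)), ∏ i ∈ u ∩ G, Real.exp (-(c i))
      ≤ (∏ i ∈ G, Real.exp (c i)) * ((Nat.choose n (n - k) : ℝ) *
          ∏ i ∈ G, (1 - ((n - k : ℕ) : ℝ) / n + ((n - k : ℕ) : ℝ) / n * Real.exp (-(c i)))) := by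
        apply mul_le_mul_of_nonneg_left h3
        exact Finset.prod_nonneg fun i _ => (Real.exp_pos _).le
    _ = (Nat.choose n k : ℝ) *
        ∏ i ∈ G, (1 - (k : ℝ) / n + (k : ℝ) / n * Real.exp (c i)) := by
        rw [Nat.choose_symm hk]
        rw [← mul_assoc, mul_comm (∏ i ∈ G, Real.exp (c i)), mul_assoc]
        congr 1
        rw [← Finset.prod_mul_distrib]
        apply prod_congr rfl
        intro i _
        have hcast : ((n - k : ℕ) : ℝ) = (n : ℝ) - k := Nat.cast_sub hk
        have hnne : (n : ℝ) ≠ 0 := by positivity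
        rw [hcast, Real.exp_neg]
        field_simp
        ring

lemma block_mgf {n k : ℕ} (hn : 0 < n) (hk : k ≤ n) (b : Fin n → ℝ)
    (hb : ∑ i, b i = 0) (θ : ℝ) (hθ : 0 ≤ θ) :
    ∑ s ∈ powersetCard k (univ : Finset (Fin n)), Real.exp (θ * ∑ i ∈ s, b i)
      ≤ (Nat.choose n k : ℝ) * Real.exp (θ ^ 2 * ∑ i, b i ^ 2) := by
  classical
  set P : Finset (Fin n) := univ.filter (fun i => 0 ≤ b i) with hP
  set N : Finset (Fin n) := univ.filter (fun i => ¬ 0 ≤ b i) with hN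
  set p : ℝ := (k : ℝ) / n with hpdef
  have hp0 : 0 ≤ p := by positivity
  have hp1 : p ≤ 1 := by
    rw [hpdef, div_le_one (by exact_mod_cast hn)]
    exact_mod_cast hk
  set F : Finset (Fin n) → ℝ := fun s => Real.exp (θ * ∑ i ∈ s ∩ P, b i) with hF
  set G : Finset (Fin n) → ℝ := fun s => Real.exp (θ * ∑ i ∈ s ∩ N, b i) with hG
  have hsplit : ∀ s : Finset (Fin n), Real.exp (θ * ∑ i ∈ s, b i) = F s * G s := by
    intro s
    rw [hF, hG]
    simp only
    rw [← Real.exp_add, ← mul_add]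
    congr 2
    have h1 : s ∩ P = s.filter (fun i => 0 ≤ b i) := by
      rw [hP]; ext i; simp [mem_filter]
    have h2 : s ∩ N = s.filter (fun i => ¬ 0 ≤ b i) := by
      rw [hN]; ext i; simp [mem_filter]
    rw [h1, h2, Finset.sum_filter_add_sum_filter_not]
  have hFsq : ∑ s ∈ powersetCard k (univ : Finset (Fin n)), F s ^ 2
      ≤ (Nat.choose n k : ℝ) * ∏ i ∈ P, (1 - p + p * Real.exp (2 * θ * b i)) := by
    have heq : ∀ s : Finset (Fin n), F s ^ 2 = ∏ i ∈ s ∩ P, Real.exp (2 * θ * b i) := by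
      intro s
      rw [hF]
      simp only
      rw [sq, ← Real.exp_add, ← Real.exp_sum]
      congr 1
      rw [← Finset.mul_sum]
      ring
    simp only [heq]
    exact sum_prod_exp_le_pos hk hn P (fun i => 2 * θ * b i)
      (fun i hi => by
        have : 0 ≤ b i := (mem_filter.1 hi).2
        positivity)
  have hGsq : ∑ s ∈ powersetCard k (univ : Finset (Fin n)), G s ^ 2
      ≤ (Nat.choose n k : ℝ) * ∏ i ∈ N, (1 - p + p * Real.exp (2 * θ * b i)) := by
    have heq : ∀ s : Finset (Fin n), G s ^ 2 = ∏ i ∈ s ∩ N, Real.exp (2 * θ * b i) := by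
      intro s
      rw [hG]
      simp only
      rw [sq, ← Real.exp_add, ← Real.exp_sum]
      congr 1
      rw [← Finset.mul_sum]
      ring
    simp only [heq]
    exact sum_prod_exp_le_neg hk hn N (fun i => 2 * θ * b i)
      (fun i hi => by
        have : ¬ 0 ≤ b i := (mem_filter.1 hi).2
        have hbi : b i ≤ 0 := le_of_not_ge this
        have h2θ : 0 ≤ 2 * θ := by linarith
        exact mul_nonpos_of_nonneg_of_nonpos h2θ hbi)
  have hXnonneg : ∀ i : Fin n, 0 ≤ 1 - p + p * Real.exp (2 * θ * b i) := by
    intro i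
    have := Real.exp_pos (2 * θ * b i)
    nlinarith
  have hprodPN : (∏ i ∈ P, (1 - p + p * Real.exp (2 * θ * b i))) *
      ∏ i ∈ N, (1 - p + p * Real.exp (2 * θ * b i)) =
      ∏ i : Fin n, (1 - p + p * Real.exp (2 * θ * b i)) := by
    rw [hP, hN]
    exact Finset.prod_filter_mul_prod_filter_not univ _ _
  have hbern : ∏ i : Fin n, (1 - p + p * Real.exp (2 * θ * b i))
      ≤ Real.exp (2 * θ ^ 2 * ∑ i, b i ^ 2) := by
    calc ∏ i : Fin n, (1 - p + p * Real.exp (2 * θ * b i))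
        ≤ ∏ i : Fin n, Real.exp (p * (2 * θ * b i) + (2 * θ * b i) ^ 2 / 2) := by
          apply Finset.prod_le_prod (fun i _ => hXnonneg i)
          intro i _
          exact bernoulli_mgf hp0 hp1
      _ = Real.exp (∑ i, (p * (2 * θ * b i) + (2 * θ * b i) ^ 2 / 2)) :=
          (Real.exp_sum _ _).symm
      _ = Real.exp (2 * θ ^ 2 * ∑ i, b i ^ 2) := by
          congr 1
          rw [Finset.sum_add_distrib]
          have e1 : ∑ i, p * (2 * θ * b i) = p * (2 * θ) * ∑ i, b i := by
            rw [Finset.mul_sum]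
            apply Finset.sum_congr rfl
            intros; ring
          have e2 : ∑ i, (2 * θ * b i) ^ 2 / 2 = 2 * θ ^ 2 * ∑ i, b i ^ 2 := by
            rw [Finset.mul_sum]
            apply Finset.sum_congr rfl
            intros; ring
          rw [e1, e2, hb]
          ring
  have hCS := Finset.sum_mul_sq_le_sq_mul_sq (powersetCard k (univ : Finset (Fin n))) F G
  have hL : ∑ s ∈ powersetCard k (univ : Finset (Fin n)), Real.exp (θ * ∑ i ∈ s, b i)
      = ∑ s ∈ powersetCard k (univ : Finset (Fin n)), F s * G s := by
    exact Finset.sum_congr rfl fun s _ => hsplit s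
  rw [hL]
  set L : ℝ := ∑ s ∈ powersetCard k (univ : Finset (Fin n)), F s * G s with hLdef
  set R : ℝ := (Nat.choose n k : ℝ) * Real.exp (θ ^ 2 * ∑ i, b i ^ 2) with hRdef
  have hLnonneg : 0 ≤ L := Finset.sum_nonneg fun s _ =>
    mul_nonneg (Real.exp_pos _).le (Real.exp_pos _).le
  have hRnonneg : 0 ≤ R := mul_nonneg (Nat.cast_nonneg _) (Real.exp_pos _).le
  have hsq : L ^ 2 ≤ R ^ 2 := by
    have hFnonneg : 0 ≤ ∑ s ∈ powersetCard k (univ : Finset (Fin n)), F s ^ 2 :=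
      Finset.sum_nonneg fun s _ => sq_nonneg _
    have hPnn : 0 ≤ (Nat.choose n k : ℝ) * ∏ i ∈ P, (1 - p + p * Real.exp (2 * θ * b i)) :=
      mul_nonneg (Nat.cast_nonneg _) (Finset.prod_nonneg fun i _ => hXnonneg i)
    have hGnn : 0 ≤ ∑ s ∈ powersetCard k (univ : Finset (Fin n)), G s ^ 2 :=
      Finset.sum_nonneg fun s _ => sq_nonneg _
    calc L ^ 2 ≤ (∑ s ∈ powersetCard k (univ : Finset (Fin n)), F s ^ 2) *
          ∑ s ∈ powersetCard k (univ : Finset (Fin n)), G s ^ 2 := hCS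
      _ ≤ ((Nat.choose n k : ℝ) * ∏ i ∈ P, (1 - p + p * Real.exp (2 * θ * b i))) *
          ((Nat.choose n k : ℝ) * ∏ i ∈ N, (1 - p + p * Real.exp (2 * θ * b i))) := by
          apply mul_le_mul hFsq hGsq hGnn hPnn
      _ = (Nat.choose n k : ℝ) ^ 2 * ((∏ i ∈ P, (1 - p + p * Real.exp (2 * θ * b i))) *
          ∏ i ∈ N, (1 - p + p * Real.exp (2 * θ * b i))) := by ring
      _ = (Nat.choose n k : ℝ) ^ 2 * ∏ i : Fin n, (1 - p + p * Real.exp (2 * θ * b i)) := by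
          rw [hprodPN]
      _ ≤ (Nat.choose n k : ℝ) ^ 2 * Real.exp (2 * θ ^ 2 * ∑ i, b i ^ 2) := by
          apply mul_le_mul_of_nonneg_left hbern (by positivity)
      _ = R ^ 2 := by
          have hexp : ∀ x : ℝ, Real.exp x ^ 2 = Real.exp (2 * x) := fun x => by
            rw [sq, ← Real.exp_add]; ring_nf
          rw [hRdef, mul_pow, hexp]
          congr 1
          ring
  nlinarith [hsq, hLnonneg, hRnonneg]


/-- **Concentration of the weighted treated-sample mean under stratified randomization.**
In each block `m` exactly `n1 m` of the `nb m` units are treated, uniformly and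
independently across blocks: the assignment is a function `A` with `A m` an
`n1 m`-element subset of `Fin (nb m)`, uniform on `Ω`.  If
`σ_a² = n⁻¹ ∑ₘ ∑_{i∈[m]} (aᵢ − ā_[m])²/e_[m]² > 0`, then for `t > 0`,
`P(∑ₘ π_[m](ā_[m]1 − ā_[m]) ≥ t) ≤ exp(−n t²/(4σ_a²))`. -/
theorem stratified_mean_concentration (M : ℕ) (nb n1 : Fin M → ℕ)
    (hnb : ∀ m, 2 ≤ nb m) (hn1 : ∀ m, 1 ≤ n1 m) (hn1' : ∀ m, n1 m ≤ nb m - 1)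
    (a : (m : Fin M) → Fin (nb m) → ℝ) (t : ℝ) (ht : 0 < t) :
    let n : ℝ := ∑ m, (nb m : ℝ)
    let π : Fin M → ℝ := fun m => (nb m : ℝ) / n
    let e : Fin M → ℝ := fun m => (n1 m : ℝ) / (nb m : ℝ)
    let abar : (m : Fin M) → ℝ := fun m => (∑ i, a m i) / (nb m : ℝ)
    let σa2 : ℝ := (1 / n) * ∑ m, ∑ i, (a m i - abar m) ^ 2 / e m ^ 2
    let Ω := Fintype.piFinset fun m => powersetCard (n1 m) (univ : Finset (Fin (nb m)))
    0 < σa2 →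
    ((Ω.filter fun A =>
        t ≤ ∑ m, π m * ((∑ i ∈ A m, a m i) / (n1 m : ℝ) - abar m)).card : ℝ) /
        (Ω.card : ℝ)
      ≤ Real.exp (-(n * t ^ 2) / (4 * σa2)) := by
  intro n π e abar σa2 Ω hσ
  have hndef : n = ∑ m, (nb m : ℝ) := rfl
  have hσdef : σa2 = (1 / n) * ∑ m, ∑ i, (a m i - abar m) ^ 2 / e m ^ 2 := rfl
  have hπdef : ∀ m, π m = (nb m : ℝ) / n := fun _ => rfl
  have hedef : ∀ m, e m = (n1 m : ℝ) / (nb m : ℝ) := fun _ => rfl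
  have habardef : ∀ m, abar m = (∑ i, a m i) / (nb m : ℝ) := fun _ => rfl
  have hΩdef : Ω = Fintype.piFinset
      fun m => powersetCard (n1 m) (univ : Finset (Fin (nb m))) := rfl
  clear_value n π e abar σa2 Ω
  have hn0 : 0 ≤ n := by rw [hndef]; positivity
  have hnpos : 0 < n := by
    rcases hn0.lt_or_eq with h | h
    · exact h
    · exfalso
      rw [hσdef, ← h] at hσ
      simp at hσ
  -- the per-block quantities
  have hnbpos : ∀ m, (0 : ℝ) < (nb m : ℝ) := fun m => by
    have := hnb m; positivity
  have hn1pos : ∀ m, (0 : ℝ) < (n1 m : ℝ) := fun m => by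
    have := hn1 m; positivity
  have hπpos : ∀ m, 0 < π m := fun m => by rw [hπdef m]; exact div_pos (hnbpos m) hnpos
  have hkn : ∀ m, n1 m ≤ nb m := fun m => le_trans (hn1' m) (Nat.sub_le _ _)
  obtain ⟨lam, hlam⟩ : ∃ l : ℝ, l = n * t / (2 * σa2) := ⟨_, rfl⟩
  have hlampos : 0 < lam := by rw [hlam]; positivity
  -- Chernoff step
  set f : ((m : Fin M) → Finset (Fin (nb m))) → ℝ :=
    fun A => ∑ m, π m * ((∑ i ∈ A m, a m i) / (n1 m : ℝ) - abar m) with hf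
  have hΩcard : (Ω.card : ℝ) = ∏ m, (Nat.choose (nb m) (n1 m) : ℝ) := by
    have h0 : Ω.card = ∏ m, (powersetCard (n1 m) (univ : Finset (Fin (nb m)))).card := by
      rw [hΩdef]; exact Fintype.card_piFinset _
    rw [h0]
    push_cast
    apply Finset.prod_congr rfl
    intro m _
    rw [card_powersetCard, card_univ, Fintype.card_fin]
  have hΩpos : (0 : ℝ) < (Ω.card : ℝ) := by
    rw [hΩcard]
    apply Finset.prod_pos
    intro m _
    exact_mod_cast Nat.choose_pos (hkn m)
  have hchernoff : ((Ω.filter fun A => t ≤ f A).card : ℝ)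
      ≤ Real.exp (-(lam * t)) * ∑ A ∈ Ω, Real.exp (lam * f A) := by
    calc ((Ω.filter fun A => t ≤ f A).card : ℝ)
        = ∑ A ∈ Ω.filter fun A => t ≤ f A, (1 : ℝ) := by
          rw [Finset.sum_const, nsmul_eq_mul, mul_one]
      _ ≤ ∑ A ∈ Ω.filter fun A => t ≤ f A, Real.exp (lam * (f A - t)) := by
          apply Finset.sum_le_sum
          intro A hA
          have hAt : t ≤ f A := (Finset.mem_filter.1 hA).2
          exact Real.one_le_exp (mul_nonneg hlampos.le (by linarith))
      _ ≤ ∑ A ∈ Ω, Real.exp (lam * (f A - t)) := by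
          apply Finset.sum_le_sum_of_subset_of_nonneg (Finset.filter_subset _ _)
          intro A _ _
          exact (Real.exp_pos _).le
      _ = Real.exp (-(lam * t)) * ∑ A ∈ Ω, Real.exp (lam * f A) := by
          rw [Finset.mul_sum]
          apply Finset.sum_congr rfl
          intro A _
          rw [← Real.exp_add]
          congr 1
          ring
  -- factorization over blocks
  have hfact : ∑ A ∈ Ω, Real.exp (lam * f A)
      = ∏ m, ∑ s ∈ powersetCard (n1 m) (univ : Finset (Fin (nb m))),
          Real.exp (lam * (π m * ((∑ i ∈ s, a m i) / (n1 m : ℝ) - abar m))) := by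
    rw [hΩdef, Finset.prod_univ_sum]
    apply Finset.sum_congr rfl
    intro A _
    rw [hf]
    simp only
    rw [Finset.mul_sum, Real.exp_sum]
  -- per-block bound
  have hblock : ∀ m, ∑ s ∈ powersetCard (n1 m) (univ : Finset (Fin (nb m))),
      Real.exp (lam * (π m * ((∑ i ∈ s, a m i) / (n1 m : ℝ) - abar m)))
      ≤ (Nat.choose (nb m) (n1 m) : ℝ) *
        Real.exp ((lam * π m / (n1 m : ℝ)) ^ 2 * ∑ i, (a m i - abar m) ^ 2) := by
    intro m
    have hbsum : ∑ i, (a m i - abar m) = 0 := by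
      rw [Finset.sum_sub_distrib, Finset.sum_const, card_univ, Fintype.card_fin]
      rw [nsmul_eq_mul, habardef m, mul_comm,
        div_mul_cancel₀ _ (ne_of_gt (hnbpos m)), sub_self]
    have hθ : 0 ≤ lam * π m / (n1 m : ℝ) :=
      le_of_lt (div_pos (mul_pos hlampos (hπpos m)) (hn1pos m))
    have hmain := block_mgf (lt_of_lt_of_le two_pos (hnb m)) (hkn m)
      (fun i => a m i - abar m) hbsum (lam * π m / (n1 m : ℝ)) hθ
    refine le_trans (le_of_eq ?_) hmain
    apply Finset.sum_congr rfl
    intro s hs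
    congr 1
    have hscard : s.card = n1 m := (mem_powersetCard_univ.1 hs)
    have hssum : ∑ i ∈ s, (a m i - abar m) = (∑ i ∈ s, a m i) - (n1 m : ℝ) * abar m := by
      rw [Finset.sum_sub_distrib, Finset.sum_const, hscard, nsmul_eq_mul]
    rw [hssum]
    have h1 : (n1 m : ℝ) ≠ 0 := ne_of_gt (hn1pos m)
    field_simp
  -- combine the blocks
  have hprod : ∏ m, (∑ s ∈ powersetCard (n1 m) (univ : Finset (Fin (nb m))),
      Real.exp (lam * (π m * ((∑ i ∈ s, a m i) / (n1 m : ℝ) - abar m))))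
      ≤ (Ω.card : ℝ) * Real.exp (∑ m, (lam * π m / (n1 m : ℝ)) ^ 2 *
          ∑ i, (a m i - abar m) ^ 2) := by
    calc ∏ m, (∑ s ∈ powersetCard (n1 m) (univ : Finset (Fin (nb m))),
        Real.exp (lam * (π m * ((∑ i ∈ s, a m i) / (n1 m : ℝ) - abar m))))
        ≤ ∏ m, ((Nat.choose (nb m) (n1 m) : ℝ) *
            Real.exp ((lam * π m / (n1 m : ℝ)) ^ 2 * ∑ i, (a m i - abar m) ^ 2)) := by
          apply Finset.prod_le_prod
          · intro m _
            exact Finset.sum_nonneg fun s _ => (Real.exp_pos _).le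
          · intro m _
            exact hblock m
      _ = (Ω.card : ℝ) * Real.exp (∑ m, (lam * π m / (n1 m : ℝ)) ^ 2 *
            ∑ i, (a m i - abar m) ^ 2) := by
          rw [Finset.prod_mul_distrib, hΩcard, Real.exp_sum]
  -- the exponent identity
  have hexpid : ∑ m, (lam * π m / (n1 m : ℝ)) ^ 2 * ∑ i, (a m i - abar m) ^ 2
      = lam ^ 2 * σa2 / n := by
    have hstep : ∑ m, (lam * π m / (n1 m : ℝ)) ^ 2 * ∑ i, (a m i - abar m) ^ 2
        = (lam ^ 2 / n ^ 2) * ∑ m, ∑ i, (a m i - abar m) ^ 2 / e m ^ 2 := by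
      rw [Finset.mul_sum]
      apply Finset.sum_congr rfl
      intro m _
      rw [Finset.mul_sum, Finset.mul_sum]
      apply Finset.sum_congr rfl
      intro i _
      rw [hπdef m, hedef m]
      have h1 : (n1 m : ℝ) ≠ 0 := ne_of_gt (hn1pos m)
      have h2 : (nb m : ℝ) ≠ 0 := ne_of_gt (hnbpos m)
      have h3 : n ≠ 0 := ne_of_gt hnpos
      field_simp
    rw [hstep, hσdef]
    ring
  -- final computation
  have hfinal : Real.exp (-(lam * t)) * ((Ω.card : ℝ) * Real.exp (lam ^ 2 * σa2 / n))
      = (Ω.card : ℝ) * Real.exp (-(n * t ^ 2) / (4 * σa2)) := by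
    rw [← mul_assoc, mul_comm (Real.exp (-(lam * t))) ((Ω.card : ℝ)), mul_assoc,
      ← Real.exp_add]
    congr 2
    rw [hlam]
    have h3 : n ≠ 0 := ne_of_gt hnpos
    have h4 : σa2 ≠ 0 := ne_of_gt hσ
    field_simp
    ring
  rw [div_le_iff₀ hΩpos]
  calc ((Ω.filter fun A =>
        t ≤ ∑ m, π m * ((∑ i ∈ A m, a m i) / (n1 m : ℝ) - abar m)).card : ℝ)
      ≤ Real.exp (-(lam * t)) * ∑ A ∈ Ω, Real.exp (lam * f A) := hchernoff
    _ ≤ Real.exp (-(lam * t)) * ((Ω.card : ℝ) * Real.exp (lam ^ 2 * σa2 / n)) := by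
        rw [hfact]
        apply mul_le_mul_of_nonneg_left _ (Real.exp_pos _).le
        rw [← hexpid]
        exact hprod
    _ = (Ω.card : ℝ) * Real.exp (-(n * t ^ 2) / (4 * σa2)) := hfinal
    _ = Real.exp (-(n * t ^ 2) / (4 * σa2)) * (Ω.card : ℝ) := by ring
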